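/- Fix U > 0, σ₁, σ₂ > 0 and K > U. Suppose Σ : (0,∞) → (0,∞) satisfies C^bs(U, K, τ, Σ(τ)) = C^σ(U,K,τ) for all τ > 0, i.e. Σ(τ) is the Black–Scholes implied volatility of the PCLVG call price with strike K and time to maturity τ. Then lim_{τ→0+} Σ(τ) = √σ₂ · log(K/U) / √(2(K−U)). -/

import Mathlib

open MeasureTheory Filter Set

/-- Standard normal cumulative distribution function. -/
noncomputable def stdNormalCDF (x : ℝ) : ℝ :=
  (Real.sqrt (2 * Real.pi))⁻¹ * ∫ y in Set.Iic x, Real.exp (-(y ^ 2) / 2)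

/-- Black–Scholes call price with zero interest and dividend rates. -/
noncomputable def bsCall (S K τ σ : ℝ) : ℝ :=
  let d1 := (Real.log (S / K) + σ ^ 2 * τ / 2) / (σ * Real.sqrt τ)
  S * stdNormalCDF d1 - K * stdNormalCDF (d1 - σ * Real.sqrt τ)

/-- Black–Scholes put price with zero interest and dividend rates. -/
noncomputable def bsPut (S K τ σ : ℝ) : ℝ := bsCall S K τ σ - S + K

/-- The denominator appearing in the PCLVG call price formula. -/
noncomputable def pclvgD (σ1 σ2 U τ : ℝ) : ℝ :=
  1 / σ1 + 1 / σ2 - (1 / σ2 - 1 / σ1) * Real.exp (-2 * U / (σ1 * τ))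

/-- The explicit PCLVG call price `C^σ(U,K,τ)`. -/
noncomputable def pclvgCall (σ1 σ2 U K τ : ℝ) : ℝ :=
  if K < U then
    (U - K) +
      τ * Real.exp (-(U - K) / (σ1 * τ)) * (1 - Real.exp (-2 * K / (σ1 * τ))) /
        pclvgD σ1 σ2 U τ
  else
    τ * Real.exp (-(K - U) / (σ2 * τ)) * (1 - Real.exp (-2 * U / (σ1 * τ))) /
      pclvgD σ1 σ2 U τ

/-- The PCLVG put price `P^σ(U,K,τ) = C^σ(U,K,τ) − (U − K)`. -/
noncomputable def pclvgPut (σ1 σ2 U K τ : ℝ) : ℝ := pclvgCall σ1 σ2 U K τ - (U - K)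

namespace PCLVGAux

noncomputable def gauss (y : ℝ) : ℝ := Real.exp (-(y ^ 2) / 2)

lemma gauss_eq : gauss = fun y : ℝ => Real.exp (-(1/2) * y ^ 2) := by
  funext y; unfold gauss; ring_nf

lemma continuous_gauss : Continuous gauss := by
  unfold gauss; continuity

lemma integrable_gauss : Integrable gauss := by
  rw [gauss_eq]
  exact integrable_exp_neg_mul_sq (by norm_num)

lemma integrable_id_mul_gauss : Integrable (fun y : ℝ => y * gauss y) := by
  apply Integrable.mono'
    ((integrable_exp_neg_mul_sq (by norm_num : (0:ℝ) < 1/4)).const_mul (Real.exp 1))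
  · exact (continuous_id.mul continuous_gauss).aestronglyMeasurable
  · refine Filter.Eventually.of_forall (fun y => ?_)
    have h1 : |y| ≤ Real.exp (y^2/4) := by
      calc |y| ≤ |y|^2/4 + 1 := by nlinarith [sq_nonneg (|y| - 2)]
      _ ≤ Real.exp (|y|^2/4) := by
          have := Real.add_one_le_exp (|y|^2/4); linarith
      _ = Real.exp (y^2/4) := by rw [sq_abs]
    have : ‖y * gauss y‖ = |y| * Real.exp (-(y^2)/2) := by
      rw [norm_mul, Real.norm_eq_abs, Real.norm_eq_abs]; unfold gauss
      rw [abs_of_pos (Real.exp_pos _)]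
    rw [this]
    calc |y| * Real.exp (-(y^2)/2) ≤ Real.exp (y^2/4) * Real.exp (-(y^2)/2) := by
          exact mul_le_mul_of_nonneg_right h1 (Real.exp_pos _).le
      _ ≤ Real.exp 1 * Real.exp (-(1/4) * y^2) := by
          rw [← Real.exp_add, ← Real.exp_add]
          apply Real.exp_le_exp.2; nlinarith [sq_nonneg y]
    
lemma hasDerivAt_neg_gauss (y : ℝ) : HasDerivAt (fun z => -gauss z) (y * gauss y) y := by
  have h1 : HasDerivAt (fun z : ℝ => -(z ^ 2) / 2) (-y) y := by
    have := ((hasDerivAt_pow 2 y).neg).div_const 2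
    exact this.congr_deriv (by push_cast; ring)
  have := (h1.exp).neg
  refine this.congr_deriv ?_
  unfold gauss; ring

lemma integral_Iic_id_mul_gauss (x : ℝ) :
    ∫ y in Iic x, y * gauss y = -gauss x := by
  have := integral_Iic_of_hasDerivAt_of_tendsto' (a := x)
    (f := fun z => -gauss z) (f' := fun y => y * gauss y)
    (m := 0) (fun y _ => hasDerivAt_neg_gauss y)
    integrable_id_mul_gauss.integrableOn ?_
  · rw [this, sub_zero]
  · have h : Tendsto (fun z : ℝ => -(z^2)/2) atBot atBot := by
      have h2 : Tendsto (fun z : ℝ => z^2) atBot atTop := by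
        have := (tendsto_pow_atTop (two_ne_zero)).comp
          (tendsto_neg_atBot_atTop (G := ℝ))
        refine this.congr (fun z => ?_)
        simp [Function.comp, neg_pow]
      have := (tendsto_const_mul_atBot_of_neg
        (show (-(1:ℝ)/2) < 0 by norm_num)).2 h2
      refine this.congr (fun z => ?_); ring
    have := (Real.tendsto_exp_atBot.comp h).neg
    simpa [gauss] using this

end PCLVGAux

namespace PCLVGAux

noncomputable def cc : ℝ := (Real.sqrt (2 * Real.pi))⁻¹

lemma cc_pos : 0 < cc := by
  unfold cc
  exact inv_pos.2 (Real.sqrt_pos.2 (by positivity))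

lemma stdNormalCDF_eq (x : ℝ) :
    stdNormalCDF x = cc * ∫ y in Iic x, gauss y := rfl

lemma stdNormalCDF_nonneg (x : ℝ) : 0 ≤ stdNormalCDF x := by
  rw [stdNormalCDF_eq]
  exact mul_nonneg cc_pos.le (integral_nonneg (fun y => (Real.exp_pos _).le))

lemma hasDerivAt_stdNormalCDF (x : ℝ) :
    HasDerivAt stdNormalCDF (cc * gauss x) x := by
  have key : stdNormalCDF = fun x =>
      cc * (∫ y in Iic (0:ℝ), gauss y) + cc * ∫ y in (0:ℝ)..x, gauss y := by
    funext z
    have h0 : (∫ y in Iic z, gauss y) - ∫ y in Iic (0:ℝ), gauss y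
        = ∫ y in (0:ℝ)..z, gauss y :=
      intervalIntegral.integral_Iic_sub_Iic integrable_gauss.integrableOn
        integrable_gauss.integrableOn
    rw [stdNormalCDF_eq, ← h0]
    ring
  rw [key]
  have h : HasDerivAt (fun u => ∫ y in (0:ℝ)..u, gauss y) (gauss x) x :=
    intervalIntegral.integral_hasDerivAt_right
      integrable_gauss.intervalIntegrable
      continuous_gauss.aestronglyMeasurable.stronglyMeasurableAtFilter
      continuous_gauss.continuousAt
  exact (h.const_mul cc).const_add (cc * ∫ y in Iic (0:ℝ), gauss y)

lemma stdNormalCDF_le {x : ℝ} (hx : x < 0) :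
    stdNormalCDF x ≤ cc * (gauss x / (-x)) := by
  rw [stdNormalCDF_eq]
  have hineq : ∀ y ∈ Iic x, gauss y ≤ x⁻¹ * (y * gauss y) := by
    intro y hy
    have hyx : 1 ≤ x⁻¹ * y := by
      have h1 : x⁻¹ < 0 := inv_lt_zero.2 hx
      have h2 : x * x⁻¹ = 1 := mul_inv_cancel₀ (ne_of_lt hx)
      nlinarith [hy.out]
    calc gauss y = 1 * gauss y := (one_mul _).symm
      _ ≤ (x⁻¹ * y) * gauss y := by
          exact mul_le_mul_of_nonneg_right hyx (Real.exp_pos _).le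
      _ = x⁻¹ * (y * gauss y) := by ring
  have hint : ∫ y in Iic x, gauss y ≤ ∫ y in Iic x, x⁻¹ * (y * gauss y) := by
    apply setIntegral_mono_on integrable_gauss.integrableOn
      (integrable_id_mul_gauss.integrableOn.const_mul _) measurableSet_Iic hineq
  have heval : ∫ y in Iic x, x⁻¹ * (y * gauss y) = gauss x / (-x) := by
    rw [integral_const_mul, integral_Iic_id_mul_gauss]
    field_simp
  calc cc * ∫ y in Iic x, gauss y ≤ cc * (gauss x / (-x)) := by
        apply mul_le_mul_of_nonneg_left _ cc_pos.le
        rw [← heval]; exact hint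

lemma gauss_le_one (x : ℝ) : gauss x ≤ 1 := by
  unfold gauss
  rw [show (1:ℝ) = Real.exp 0 by simp]
  apply Real.exp_le_exp.2
  nlinarith [sq_nonneg x]

lemma stdNormalCDF_tendsto_atBot :
    Tendsto stdNormalCDF atBot (nhds 0) := by
  apply tendsto_of_tendsto_of_tendsto_of_le_of_le' (g := fun _ => (0:ℝ))
    (h := fun x => cc * (1 / (-x))) tendsto_const_nhds
  · have h1 : Tendsto (fun x : ℝ => -x) atBot atTop := tendsto_neg_atBot_atTop
    have h2 : Tendsto (fun x : ℝ => (-x)⁻¹) atBot (nhds 0) := h1.inv_tendsto_atTop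
    have h3 := h2.const_mul cc
    simpa [one_div] using h3
  · exact Eventually.of_forall stdNormalCDF_nonneg
  · filter_upwards [Iio_mem_atBot (0:ℝ)] with x hx
    calc stdNormalCDF x ≤ cc * (gauss x / (-x)) := stdNormalCDF_le hx
      _ ≤ cc * (1 / (-x)) := by
          have hnx : (0:ℝ) < -x := neg_pos.2 hx
          gcongr
          · exact cc_pos.le
          · exact gauss_le_one x

end PCLVGAux

namespace PCLVGAux

noncomputable def dd1 (k v : ℝ) : ℝ := -(k/v) + v/2

noncomputable def gfun (U k v : ℝ) : ℝ :=
  U * stdNormalCDF (dd1 k v) - (U * Real.exp k) * stdNormalCDF (dd1 k v - v)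

lemma hasDerivAt_dd1 (k : ℝ) {v : ℝ} (hv : v ≠ 0) :
    HasDerivAt (dd1 k) (k/v^2 + 1/2) v := by
  have h1 : HasDerivAt (fun v : ℝ => -(k * v⁻¹) + v/2) (-(k * (-(v^2)⁻¹)) + 1/2) v := by
    exact (((hasDerivAt_inv hv).const_mul k).neg).add ((hasDerivAt_id v).div_const 2)
  have h2 : (fun v : ℝ => -(k * v⁻¹) + v/2) = dd1 k := by
    funext w; unfold dd1; rw [div_eq_mul_inv k w]
  rw [h2] at h1
  convert h1 using 1
  field_simp

lemma gauss_shift {k v : ℝ} (hv : v ≠ 0) :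
    gauss (dd1 k v - v) = gauss (dd1 k v) * Real.exp (-k) := by
  unfold gauss
  rw [← Real.exp_add]
  congr 1
  have : (dd1 k v - v)^2 = (dd1 k v)^2 + 2*k := by
    unfold dd1; field_simp; ring
  rw [this]; ring

lemma gfun_hasDerivAt {U : ℝ} (k : ℝ) {v : ℝ} (hv : 0 < v) :
    HasDerivAt (gfun U k) (U * (cc * gauss (dd1 k v))) v := by
  have hd1 := hasDerivAt_dd1 k hv.ne'
  have h1 : HasDerivAt (fun w => stdNormalCDF (dd1 k w))
      (cc * gauss (dd1 k v) * (k/v^2 + 1/2)) v :=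
    (hasDerivAt_stdNormalCDF (dd1 k v)).comp v hd1
  have hinner : HasDerivAt (fun w => dd1 k w - w) (k/v^2 + 1/2 - 1) v := by
    exact hd1.sub (hasDerivAt_id v)
  have h2 := HasDerivAt.comp (h := fun w => dd1 k w - w) v
    (hasDerivAt_stdNormalCDF (dd1 k v - v)) hinner
  have h2' : HasDerivAt (fun w => stdNormalCDF (dd1 k w - w))
      (cc * gauss (dd1 k v - v) * (k/v^2 + 1/2 - 1)) v := h2
  have h3 := (h1.const_mul U).sub (h2'.const_mul (U * Real.exp k))
  unfold gfun
  refine h3.congr_deriv ?_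
  rw [gauss_shift hv.ne', Real.exp_neg]
  have hek : Real.exp k ≠ 0 := (Real.exp_pos k).ne'
  field_simp
  ring

lemma gfun_strictMonoOn {U : ℝ} (hU : 0 < U) (k : ℝ) :
    StrictMonoOn (gfun U k) (Ioi 0) := by
  apply strictMonoOn_of_deriv_pos (convex_Ioi 0)
  · exact fun v hv => (gfun_hasDerivAt k hv).continuousAt.continuousWithinAt
  · intro v hv
    rw [interior_Ioi] at hv
    rw [(gfun_hasDerivAt k hv).deriv]
    exact mul_pos hU (mul_pos cc_pos (Real.exp_pos _))

lemma gfun_tendsto_zero {U k : ℝ} (hU : 0 < U) (hk : 0 < k) :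
    Tendsto (gfun U k) (nhdsWithin 0 (Ioi 0)) (nhds 0) := by
  have hd1 : Tendsto (fun v => dd1 k v) (nhdsWithin 0 (Ioi 0)) atBot := by
    have hkv : Tendsto (fun v : ℝ => k * v⁻¹) (nhdsWithin 0 (Ioi 0)) atTop :=
      Tendsto.const_mul_atTop hk tendsto_inv_nhdsGT_zero
    have h0 : Tendsto (fun v : ℝ => -(k * v⁻¹) + 1) (nhdsWithin 0 (Ioi 0)) atBot :=
      tendsto_atBot_add_const_right _ 1 (tendsto_neg_atTop_atBot.comp hkv)
    apply tendsto_atBot_mono' _ _ h0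
    filter_upwards [Ioo_mem_nhdsGT_of_mem (Set.left_mem_Ico.2 (by norm_num : (0:ℝ) < 2))]
      with v hv
    unfold dd1
    rw [div_eq_mul_inv]
    have := hv.2
    linarith
  have hd2 : Tendsto (fun v => dd1 k v - v) (nhdsWithin 0 (Ioi 0)) atBot := by
    apply tendsto_atBot_mono' _ _ hd1
    filter_upwards [self_mem_nhdsWithin] with v hv
    have : (0:ℝ) < v := hv
    linarith
  have hN1 := stdNormalCDF_tendsto_atBot.comp hd1
  have hN2 := stdNormalCDF_tendsto_atBot.comp hd2
  have := (hN1.const_mul U).sub (hN2.const_mul (U * Real.exp k))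
  unfold gfun
  simpa [Function.comp] using this

lemma gfun_nonneg {U k : ℝ} (hU : 0 < U) (hk : 0 < k) {w : ℝ} (hw : 0 < w) :
    0 ≤ gfun U k w := by
  apply le_of_tendsto (gfun_tendsto_zero hU hk)
  filter_upwards [Ioo_mem_nhdsGT_of_mem (Set.left_mem_Ico.2 hw)] with s hs
  exact ((gfun_strictMonoOn hU k).monotoneOn) (Set.mem_Ioi.2 hs.1)
    (Set.mem_Ioi.2 hw) hs.2.le

lemma gfun_pos {U k : ℝ} (hU : 0 < U) (hk : 0 < k) {v : ℝ} (hv : 0 < v) :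
    0 < gfun U k v := by
  calc (0:ℝ) ≤ gfun U k (v/2) := gfun_nonneg hU hk (by linarith)
    _ < gfun U k v := (gfun_strictMonoOn hU k) (Set.mem_Ioi.2 (by linarith))
        (Set.mem_Ioi.2 hv) (by linarith)

end PCLVGAux

namespace PCLVGAux

lemma exp_div_tendsto {a b : ℝ} (ha : a < 0) (hb : 0 < b) :
    Tendsto (fun τ : ℝ => Real.exp (a/(b*τ))) (nhdsWithin 0 (Ioi 0)) (nhds 0) := by
  have hab : a / b < 0 := div_neg_of_neg_of_pos ha hb
  have h1 : Tendsto (fun τ : ℝ => a/b * τ⁻¹) (nhdsWithin 0 (Ioi 0)) atBot :=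
    (tendsto_const_mul_atBot_of_neg hab).2 tendsto_inv_nhdsGT_zero
  have := Real.tendsto_exp_atBot.comp h1
  refine this.congr (fun τ => ?_)
  simp only [Function.comp]
  rw [← div_div, div_eq_mul_inv, div_eq_mul_inv (a*b⁻¹)]

lemma sq_tendsto_zero {f : ℝ → ℝ} {l : Filter ℝ} (h : Tendsto f l (nhds 0)) :
    Tendsto (fun τ => (f τ)^2) l (nhds 0) := by
  have := h.mul h
  simpa [sq] using this

lemma sq_log_tendsto_zero {f : ℝ → ℝ} {l : Filter ℝ}
    (h : Tendsto f l (nhdsWithin 0 (Ioi 0))) :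
    Tendsto (fun τ => (f τ)^2 * Real.log (f τ)) l (nhds 0) := by
  have h0 := (tendsto_log_mul_rpow_nhdsGT_zero (r := 2) (by norm_num)).comp h
  refine h0.congr' ?_
  filter_upwards [h.eventually self_mem_nhdsWithin] with τ hτ
  have : (0:ℝ) < f τ := hτ
  simp only [Function.comp]
  rw [show ((2:ℝ)) = ((2:ℕ):ℝ) by norm_num, Real.rpow_natCast]
  ring

end PCLVGAux


set_option maxHeartbeats 2000000 in
open PCLVGAux in
/-- Short-maturity asymptotics of the PCLVG implied volatility for an
out-of-the-money call strike `K > U`: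
`lim_{τ→0+} Σ(τ) = √σ₂ · log(K/U) / √(2(K−U))`. -/
theorem pclvg_implied_vol_short_term_OTM_call (U σ1 σ2 K : ℝ)
    (hU : 0 < U) (h1 : 0 < σ1) (h2 : 0 < σ2) (hK : U < K)
    (IV : ℝ → ℝ) (hpos : ∀ τ : ℝ, 0 < τ → 0 < IV τ)
    (hiv : ∀ τ : ℝ, 0 < τ → bsCall U K τ (IV τ) = pclvgCall σ1 σ2 U K τ) :
    Filter.Tendsto IV (nhdsWithin 0 (Set.Ioi 0))
      (nhds (Real.sqrt σ2 * Real.log (K / U) / Real.sqrt (2 * (K - U)))) := by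
  have hK0 : 0 < K := hU.trans hK
  set l := nhdsWithin (0:ℝ) (Set.Ioi 0) with hl
  set k := Real.log (K / U) with hkdef
  have hk : 0 < k := Real.log_pos ((one_lt_div hU).2 hK)
  have hKU : K = U * Real.exp k := by
    rw [hkdef, Real.exp_log (by positivity)]
    field_simp
  set v : ℝ → ℝ := fun τ => IV τ * Real.sqrt τ with hvdef
  have hvpos : ∀ τ : ℝ, 0 < τ → 0 < v τ := fun τ hτ =>
    mul_pos (hpos τ hτ) (Real.sqrt_pos.2 hτ)
  set C : ℝ → ℝ := fun τ => pclvgCall σ1 σ2 U K τ with hCdef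
  -- bsCall as gfun
  have hbs : ∀ τ : ℝ, 0 < τ → bsCall U K τ (IV τ) = gfun U k (v τ) := by
    intro τ hτ
    have hs : 0 < Real.sqrt τ := Real.sqrt_pos.2 hτ
    have hIV : 0 < IV τ := hpos τ hτ
    have hvne : v τ ≠ 0 := (hvpos τ hτ).ne'
    have hlogUK : Real.log (U / K) = -k := by
      rw [hkdef, ← Real.log_inv]
      congr 1
      rw [inv_div]
    have hd1 : (Real.log (U / K) + (IV τ) ^ 2 * τ / 2) / (IV τ * Real.sqrt τ)
        = dd1 k (v τ) := by
      rw [hlogUK]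
      unfold dd1
      rw [hvdef]
      have hsq : (IV τ * Real.sqrt τ) * (IV τ * Real.sqrt τ) = (IV τ)^2 * τ := by
        rw [show (IV τ * Real.sqrt τ) * (IV τ * Real.sqrt τ)
          = (IV τ)^2 * (Real.sqrt τ * Real.sqrt τ) by ring,
          Real.mul_self_sqrt hτ.le]
      field_simp
      rw [Real.sq_sqrt hτ.le]
    show U * stdNormalCDF _ - K * stdNormalCDF _ = _
    rw [hd1]
    show U * stdNormalCDF (dd1 k (v τ)) - K * stdNormalCDF (dd1 k (v τ) - v τ)
      = gfun U k (v τ)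
    unfold gfun
    rw [← hKU]
  have hgv : ∀ τ : ℝ, 0 < τ → gfun U k (v τ) = C τ := by
    intro τ hτ
    rw [← hbs τ hτ]
    exact hiv τ hτ
  have hCpos : ∀ τ : ℝ, 0 < τ → 0 < C τ := fun τ hτ =>
    (hgv τ hτ) ▸ gfun_pos hU hk (hvpos τ hτ)
  -- formula for C
  have hCform : ∀ τ : ℝ, C τ =
      τ * Real.exp (-(K - U) / (σ2 * τ)) * (1 - Real.exp (-2 * U / (σ1 * τ))) /
        pclvgD σ1 σ2 U τ := by
    intro τ
    rw [hCdef]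
    exact if_neg (not_lt.2 hK.le)
  have hτ0 : Tendsto (fun τ : ℝ => τ) l (nhds 0) :=
    tendsto_id.mono_right nhdsWithin_le_nhds
  have hexp1 : Tendsto (fun τ => Real.exp (-2 * U / (σ1 * τ))) l (nhds 0) :=
    exp_div_tendsto (by linarith) h1
  have hexp2 : Tendsto (fun τ => Real.exp (-(K - U) / (σ2 * τ))) l (nhds 0) :=
    exp_div_tendsto (by linarith) h2
  have h1e : Tendsto (fun τ => 1 - Real.exp (-2 * U / (σ1 * τ))) l (nhds 1) := by
    have := (tendsto_const_nhds (x := (1:ℝ)) (f := l)).sub hexp1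
    simpa using this
  have hD : Tendsto (fun τ => pclvgD σ1 σ2 U τ) l (nhds (1/σ1 + 1/σ2)) := by
    unfold pclvgD
    have := (tendsto_const_nhds (x := (1/σ1 + 1/σ2 : ℝ)) (f := l)).sub
      (hexp1.const_mul (1/σ2 - 1/σ1))
    simpa using this
  have hDne : (1/σ1 + 1/σ2 : ℝ) ≠ 0 := by positivity
  have hC0 : Tendsto C l (nhds 0) := by
    have h := ((hτ0.mul hexp2).mul h1e).div hD hDne
    refine (h.congr (fun τ => (hCform τ).symm)).congr' ?_ |>.mono_right ?_
    · exact Eventually.of_forall (fun τ => rfl)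
    · simp
  -- positivity facts for τ > 0
  have hepos : ∀ τ : ℝ, 0 < τ → 0 < 1 - Real.exp (-2 * U / (σ1 * τ)) := by
    intro τ hτ
    have : (-2 * U / (σ1 * τ)) < 0 := by
      apply div_neg_of_neg_of_pos (by linarith) (by positivity)
    have := Real.exp_lt_one_iff.2 this
    linarith
  have hDpos : ∀ τ : ℝ, 0 < τ → 0 < pclvgD σ1 σ2 U τ := by
    intro τ hτ
    unfold pclvgD
    have he0 : 0 < Real.exp (-2 * U / (σ1 * τ)) := Real.exp_pos _
    have he1 : Real.exp (-2 * U / (σ1 * τ)) < 1 := by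
      have := hepos τ hτ; linarith
    have ha : 0 < 1/σ1 := by positivity
    have hb : 0 < 1/σ2 := by positivity
    nlinarith [mul_pos ha he0, mul_pos hb (sub_pos.2 he1)]
  -- tau log C
  have hτlogC : Tendsto (fun τ => τ * Real.log (C τ)) l (nhds (-((K - U)/σ2))) := by
    have hτlogτ : Tendsto (fun τ : ℝ => τ * Real.log τ) l (nhds 0) := by
      have h0 := tendsto_log_mul_rpow_nhdsGT_zero (r := 1) (by norm_num)
      refine (h0.congr' ?_).mono_left (le_of_eq hl)
      filter_upwards [self_mem_nhdsWithin] with τ hτ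
      rw [Real.rpow_one]
      ring
    have hlog1e : Tendsto (fun τ => Real.log (1 - Real.exp (-2 * U / (σ1 * τ)))) l
        (nhds 0) := by
      have := (Real.continuousAt_log (by norm_num : (1:ℝ) ≠ 0)).tendsto.comp h1e
      simpa [Function.comp_def] using this
    have hτlog1e : Tendsto (fun τ => τ * Real.log (1 - Real.exp (-2 * U / (σ1 * τ)))) l
        (nhds 0) := by
      have := hτ0.mul hlog1e; simpa using this
    have hlogD : Tendsto (fun τ => Real.log (pclvgD σ1 σ2 U τ)) l
        (nhds (Real.log (1/σ1 + 1/σ2))) :=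
      (Real.continuousAt_log hDne).tendsto.comp hD
    have hτlogD : Tendsto (fun τ => τ * Real.log (pclvgD σ1 σ2 U τ)) l (nhds 0) := by
      have := hτ0.mul hlogD; simpa using this
    have hsum := ((hτlogτ.add (tendsto_const_nhds (x := -((K - U)/σ2)))).add
      hτlog1e).sub hτlogD
    have hval : ((0 : ℝ) + -((K - U)/σ2) + 0 - 0) = -((K - U)/σ2) := by ring
    rw [hval] at hsum
    refine hsum.congr' ?_
    filter_upwards [self_mem_nhdsWithin] with τ hτ
    have hτp : (0:ℝ) < τ := hτ
    have he1 : Real.exp (-(K - U) / (σ2 * τ)) ≠ 0 := (Real.exp_pos _).ne'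
    have he2 : 1 - Real.exp (-2 * U / (σ1 * τ)) ≠ 0 := (hepos τ hτp).ne'
    have hDn : pclvgD σ1 σ2 U τ ≠ 0 := (hDpos τ hτp).ne'
    rw [hCform τ, Real.log_div (by positivity) hDn, Real.log_mul (by positivity) he2,
      Real.log_mul hτp.ne' he1, Real.log_exp]
    field_simp
  -- v tends to 0 within Ioi 0
  have hv0 : Tendsto v l (nhdsWithin 0 (Ioi 0)) := by
    rw [tendsto_nhdsWithin_iff]
    constructor
    · rw [tendsto_order]
      constructor
      · intro a ha
        filter_upwards [self_mem_nhdsWithin] with τ hτ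
        exact lt_trans ha (hvpos τ hτ)
      · intro b hb
        have hgb : 0 < gfun U k b := gfun_pos hU hk hb
        filter_upwards [self_mem_nhdsWithin, hC0.eventually_lt_const hgb] with τ hτ hCb
        by_contra hle
        push_neg at hle
        have : gfun U k b ≤ gfun U k (v τ) :=
          (gfun_strictMonoOn hU k).monotoneOn (Set.mem_Ioi.2 hb)
            (Set.mem_Ioi.2 (hvpos τ hτ)) hle
        rw [hgv τ hτ] at this
        exact absurd hCb (not_lt.2 this)
    · filter_upwards [self_mem_nhdsWithin] with τ hτ
      exact Set.mem_Ioi.2 (hvpos τ hτ)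
  have hv0' : Tendsto v l (nhds 0) := hv0.mono_right nhdsWithin_le_nhds
  have hv2 : Tendsto (fun τ => (v τ)^2) l (nhds 0) := sq_tendsto_zero hv0'
  -- main asymptotic
  have hA : Tendsto (fun τ => (v τ)^2 * Real.log (C τ)) l (nhds (-(k^2)/2)) := by
    have hvsmall : ∀ᶠ τ in l, (v τ)^2 < k := hv2.eventually_lt_const hk
    have hUcc : 0 < U * cc := mul_pos hU cc_pos
    rw [tendsto_order]
    constructor
    · -- lower bound
      intro a ha
      set L := k^2/(2*(-a)) with hLdef
      have hapos : 0 < -a := by nlinarith [sq_nonneg k]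
      have hL : 0 < L := by positivity
      have hL1 : L < 1 := by
        rw [hLdef, div_lt_one (by positivity)]
        nlinarith
      set θ := Real.sqrt ((L+1)/2) with hθdef
      have hθsq : θ^2 = (L+1)/2 := Real.sq_sqrt (by positivity)
      have hθpos : 0 < θ := Real.sqrt_pos.2 (by positivity)
      have hθ1 : θ < 1 := by nlinarith
      have hθL : L < θ^2 := by rw [hθsq]; linarith
      have hM : a < -(k^2/(2*θ^2)) := by
        have h3 : k^2 < θ^2 * (2*(-a)) := (div_lt_iff₀ (by positivity)).1 hθL
        have h4 : k^2/(2*θ^2) < -a := (div_lt_iff₀ (by positivity)).2 (by nlinarith)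
        linarith
      have hFlow : Tendsto (fun τ => (v τ)^2 * Real.log ((1-θ)*U*cc)
          + (v τ)^2 * Real.log (v τ) - (-(k/θ) + θ*(v τ)^2/2)^2/2) l
          (nhds (-(k^2/(2*θ^2)))) := by
        have t1 : Tendsto (fun τ => (v τ)^2 * Real.log ((1-θ)*U*cc)) l (nhds 0) := by
          simpa using hv2.mul_const (Real.log ((1-θ)*U*cc))
        have t2 := sq_log_tendsto_zero hv0
        have t3' : Tendsto (fun τ => -(k/θ) + θ*(v τ)^2/2) l (nhds (-(k/θ))) := by
          have := (tendsto_const_nhds (x := -(k/θ)) (f := l)).add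
            ((hv2.const_mul θ).div_const 2)
          simpa using this
        have t3 := (t3'.pow 2).div_const 2
        have hsum := (t1.add t2).sub t3
        have hval3 : (0:ℝ) + 0 - (-(k/θ))^2/2 = -(k^2/(2*θ^2)) := by
          rw [neg_pow, div_pow]
          ring
        rw [hval3] at hsum
        exact hsum
      filter_upwards [self_mem_nhdsWithin, hvsmall, hFlow.eventually_const_lt hM]
        with τ hτ hsm hFl
      have hτp : (0:ℝ) < τ := hτ
      set w := v τ with hwdef
      have hw : 0 < w := hvpos τ hτp
      have hθw : 0 < θ * w := mul_pos hθpos hw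
      have hθw_le : θ * w ≤ w := by nlinarith
      refine lt_of_lt_of_le hFl ?_
      set m := U * (cc * gauss (dd1 k (θ*w))) with hmdef
      have hmpos : 0 < m := mul_pos hU (mul_pos cc_pos (Real.exp_pos _))
      -- monotonicity of s ↦ gfun - m s on [θw, w]
      have hd_mono : ∀ s1 s2 : ℝ, 0 < s1 → s1 ≤ s2 → dd1 k s1 ≤ dd1 k s2 := by
        intro s1 s2 hs1 h12
        unfold dd1
        have hks : k/s2 ≤ k/s1 := by
          apply div_le_div_of_nonneg_left hk.le hs1 h12
        linarith
      have hd1w : dd1 k w ≤ 0 := by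
        unfold dd1
        have h5 : w/2 ≤ k/w := by
          rw [div_le_div_iff₀ (by norm_num) hw]
          nlinarith
        linarith
      have hmono : MonotoneOn (fun s => gfun U k s - m*s) (Icc (θ*w) w) := by
        apply monotoneOn_of_deriv_nonneg (convex_Icc _ _)
        · intro s hs
          have hs0 : 0 < s := lt_of_lt_of_le hθw hs.1
          exact ((gfun_hasDerivAt k hs0).sub
            ((hasDerivAt_id s).const_mul m)).continuousAt.continuousWithinAt
        · intro s hs
          rw [interior_Icc] at hs
          have hs0 : 0 < s := lt_trans hθw hs.1
          exact ((gfun_hasDerivAt k hs0).sub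
            ((hasDerivAt_id s).const_mul m)).differentiableAt.differentiableWithinAt
        · intro s hs
          rw [interior_Icc] at hs
          have hs0 : 0 < s := lt_trans hθw hs.1
          have hds : HasDerivAt (fun s : ℝ => gfun U k s - m*s)
              (U * (cc * gauss (dd1 k s)) - m*1) s :=
            (gfun_hasDerivAt k hs0).sub ((hasDerivAt_id s).const_mul m)
          rw [hds.deriv]
          have hdle : dd1 k (θ*w) ≤ dd1 k s := hd_mono _ _ hθw hs.1.le
          have hdle2 : dd1 k s ≤ 0 := le_trans (hd_mono _ _ hs0 hs.2.le) hd1w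
          have hsq : (dd1 k s)^2 ≤ (dd1 k (θ*w))^2 := by nlinarith
          have hg : gauss (dd1 k (θ*w)) ≤ gauss (dd1 k s) := by
            unfold gauss
            apply Real.exp_le_exp.2
            linarith
          rw [hmdef]
          have := mul_le_mul_of_nonneg_left
            (mul_le_mul_of_nonneg_left hg cc_pos.le) hU.le
          simp only [mul_one]
          linarith
      have hmono_app := hmono (Set.mem_Icc.2 ⟨le_refl _, hθw_le⟩)
        (Set.mem_Icc.2 ⟨hθw_le, le_refl _⟩) hθw_le
      have hgθ : 0 ≤ gfun U k (θ*w) := gfun_nonneg hU hk hθw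
      have hkey : (1-θ)*w*m ≤ gfun U k w := by
        have hr : (1-θ)*w*m = m*w - m*(θ*w) := by ring
        simp only at hmono_app
        linarith
      -- take logs
      set P := ((1-θ)*U*cc) * (w * gauss (dd1 k (θ*w))) with hPdef
      have hPeq : P = (1-θ)*w*m := by rw [hPdef, hmdef]; ring
      have h1θ : 0 < 1 - θ := by linarith
      have hPpos : 0 < P := by
        rw [hPdef]
        exact mul_pos (mul_pos (mul_pos h1θ hU) cc_pos) (mul_pos hw (Real.exp_pos _))
      have hCw : C τ = gfun U k w := (hgv τ hτp).symm
      have hlogle : Real.log P ≤ Real.log (C τ) := by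
        rw [hCw]
        exact Real.log_le_log hPpos (hPeq ▸ hkey)
      have hgne : gauss (dd1 k (θ*w)) ≠ 0 := (Real.exp_pos _).ne'
      have hlogP : Real.log P = Real.log ((1-θ)*U*cc) + Real.log w
          + (-((dd1 k (θ*w))^2/2)) := by
        have hwg : (0:ℝ) < w * gauss (dd1 k (θ*w)) := mul_pos hw (Real.exp_pos _)
        rw [hPdef, Real.log_mul (ne_of_gt (mul_pos (mul_pos h1θ hU) cc_pos)) hwg.ne',
          Real.log_mul hw.ne' hgne]
        unfold gauss
        rw [Real.log_exp]
        ring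
      have hident : (w * dd1 k (θ*w))^2 = (-(k/θ) + θ*w^2/2)^2 := by
        congr 1
        unfold dd1
        field_simp
      have hmul := mul_le_mul_of_nonneg_left hlogle (sq_nonneg w)
      calc (v τ)^2 * Real.log ((1-θ)*U*cc) + (v τ)^2 * Real.log (v τ)
            - (-(k/θ) + θ*(v τ)^2/2)^2/2
          = w^2 * Real.log P := by
            rw [hlogP, ← hident]
            ring
        _ ≤ (v τ)^2 * Real.log (C τ) := hmul
    · -- upper bound
      intro a ha
      have hFup : Tendsto (fun τ => (v τ)^2 * Real.log (U*cc)
          - (-k + (v τ)^2/2)^2/2 - (v τ)^2 * Real.log (k - (v τ)^2/2)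
          + (v τ)^2 * Real.log (v τ)) l (nhds (-(k^2)/2)) := by
        have t1 : Tendsto (fun τ => (v τ)^2 * Real.log (U*cc)) l (nhds 0) := by
          simpa using hv2.mul_const (Real.log (U*cc))
        have t2' : Tendsto (fun τ => -k + (v τ)^2/2) l (nhds (-k)) := by
          have := (tendsto_const_nhds (x := -k) (f := l)).add (hv2.div_const 2)
          simpa using this
        have t2 := (t2'.pow 2).div_const 2
        have t3 : Tendsto (fun τ => (v τ)^2 * Real.log (k - (v τ)^2/2)) l (nhds 0) := by
          have hlg : Tendsto (fun τ => Real.log (k - (v τ)^2/2)) l (nhds (Real.log k)) := by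
            have hin : Tendsto (fun τ => k - (v τ)^2/2) l (nhds k) := by
              have := (tendsto_const_nhds (x := k) (f := l)).sub (hv2.div_const 2)
              simpa using this
            exact (Real.continuousAt_log hk.ne').tendsto.comp hin
          have := hv2.mul hlg
          simpa using this
        have t4 := sq_log_tendsto_zero hv0
        have hsum := ((t1.sub t2).sub t3).add t4
        have hval4 : ((0:ℝ) - (-k)^2/2 - 0 + 0) = -(k^2)/2 := by
          rw [neg_pow]; ring
        rw [hval4] at hsum
        exact hsum
      filter_upwards [self_mem_nhdsWithin, hvsmall, hFup.eventually_lt_const ha]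
        with τ hτ hsm hFu
      have hτp : (0:ℝ) < τ := hτ
      set w := v τ with hwdef
      have hw : 0 < w := hvpos τ hτp
      have hknum : 0 < k - w^2/2 := by nlinarith
      have hd1neg : dd1 k w < 0 := by
        unfold dd1
        have h5 : w/2 < k/w := by
          rw [div_lt_div_iff₀ (by norm_num) hw]
          nlinarith
        linarith
      refine lt_of_le_of_lt ?_ hFu
      -- C τ ≤ U * N(d1) ≤ U * cc * gauss d1 / (-d1)
      have hCw : C τ = gfun U k w := (hgv τ hτp).symm
      set Q := (U*cc) * (gauss (dd1 k w) / (-(dd1 k w))) with hQdef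
      have hQpos : 0 < Q := by
        rw [hQdef]
        exact mul_pos hUcc (div_pos (Real.exp_pos _) (by linarith))
      have hCleQ : C τ ≤ Q := by
        rw [hCw]
        unfold gfun
        have h6 : (U * Real.exp k) * stdNormalCDF (dd1 k w - w) ≥ 0 :=
          mul_nonneg (by positivity) (stdNormalCDF_nonneg _)
        have h7 : stdNormalCDF (dd1 k w) ≤ cc * (gauss (dd1 k w) / (-(dd1 k w))) :=
          stdNormalCDF_le hd1neg
        have h8 := mul_le_mul_of_nonneg_left h7 hU.le
        rw [hQdef]
        calc U * stdNormalCDF (dd1 k w) - (U * Real.exp k) * stdNormalCDF (dd1 k w - w)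
            ≤ U * stdNormalCDF (dd1 k w) := by linarith
          _ ≤ U * (cc * (gauss (dd1 k w) / (-(dd1 k w)))) := h8
          _ = (U*cc) * (gauss (dd1 k w) / (-(dd1 k w))) := by ring
      have hlogle : Real.log (C τ) ≤ Real.log Q := Real.log_le_log (hCpos τ hτp) hCleQ
      have hnd1 : -(dd1 k w) = (k - w^2/2)/w := by
        unfold dd1
        field_simp
        ring
      have hgne : gauss (dd1 k w) ≠ 0 := (Real.exp_pos _).ne'
      have hndpos : 0 < -(dd1 k w) := by linarith
      have hlogQ : Real.log Q = Real.log (U*cc) + (-((dd1 k w)^2/2))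
          - (Real.log (k - w^2/2) - Real.log w) := by
        have hqq : (0:ℝ) < gauss (dd1 k w) / (-(dd1 k w)) :=
          div_pos (Real.exp_pos _) hndpos
        rw [hQdef, Real.log_mul hUcc.ne' hqq.ne', Real.log_div hgne hndpos.ne']
        unfold gauss
        rw [Real.log_exp, hnd1, Real.log_div hknum.ne' hw.ne']
        ring
      have hident : (w * dd1 k w)^2 = (-k + w^2/2)^2 := by
        congr 1
        unfold dd1
        field_simp
      have hmul := mul_le_mul_of_nonneg_left hlogle (sq_nonneg w)
      calc (v τ)^2 * Real.log (C τ) ≤ w^2 * Real.log Q := hmul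
        _ = (v τ)^2 * Real.log (U*cc) - (-k + (v τ)^2/2)^2/2
            - (v τ)^2 * Real.log (k - (v τ)^2/2) + (v τ)^2 * Real.log (v τ) := by
            rw [hlogQ, ← hident]
            ring
  -- combine
  have hBne : -((K - U)/σ2) ≠ 0 := by
    have : 0 < (K - U)/σ2 := div_pos (by linarith) h2
    linarith
  have hIV2 : Tendsto (fun τ => (IV τ)^2) l (nhds (k^2 * σ2 / (2*(K - U)))) := by
    have hdiv := hA.div hτlogC hBne
    have hval : (-(k^2)/2) / (-((K - U)/σ2)) = k^2 * σ2 / (2*(K - U)) := by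
      have hKUne : K - U ≠ 0 := by linarith
      rw [div_neg, div_div_eq_mul_div, ← neg_div,
        div_eq_div_iff hKUne (by positivity : (2*(K - U)) ≠ 0)]
      ring
    rw [hval] at hdiv
    refine hdiv.congr' ?_
    filter_upwards [self_mem_nhdsWithin, hC0.eventually_lt_const (by norm_num : (0:ℝ) < 1)]
      with τ hτ hC1
    have hτp : (0:ℝ) < τ := hτ
    have hlog : Real.log (C τ) < 0 := Real.log_neg (hCpos τ hτp) hC1
    have hv2eq : (v τ)^2 = (IV τ)^2 * τ := by
      rw [hvdef]
      simp only [mul_pow]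
      rw [Real.sq_sqrt hτp.le]
    simp only [Pi.div_apply]
    rw [hv2eq]
    rw [div_eq_iff (by exact mul_ne_zero hτp.ne' hlog.ne)]
    ring
  have hfinal := (Real.continuous_sqrt.continuousAt (x := k^2 * σ2 / (2*(K - U)))).tendsto.comp hIV2
  have hval2 : Real.sqrt (k^2 * σ2 / (2*(K - U))) =
      Real.sqrt σ2 * k / Real.sqrt (2*(K - U)) := by
    rw [show k^2 * σ2 = σ2 * k^2 by ring, Real.sqrt_div (by positivity),
      Real.sqrt_mul h2.le, Real.sqrt_sq hk.le]
  rw [hval2] at hfinal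
  refine hfinal.congr' ?_
  filter_upwards [self_mem_nhdsWithin] with τ hτ
  simp only [Function.comp]
  rw [Real.sqrt_sq (hpos τ hτ).le]
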